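/- Under the square truncated SVD setting with the differential relation, if additionally dU†U + U†dU = 0, dV†V + V†dV = 0, dS is diagonal with real entries, and s_k ≠ 0 for every k, then the diagonal entries of the sum U†dU + dV†V are determined by (U† dU + dV† V)_{kk} = (U† dA V − V† (dA)† U)_{kk} / (2 s_k) for every index k. -/

import Mathlib

open Matrix

theorem stmt_6
    {r t : ℕ} (hr : 0 < r) (ht : 0 < t) (htr : t < r)
    (U V : Matrix (Fin r) (Fin t) ℂ)
    (Up Vp : Matrix (Fin r) (Fin (r - t)) ℂ)
    (s : Fin t → ℝ) (sp : Fin (r - t) → ℝ)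
    (S : Matrix (Fin t) (Fin t) ℂ)
    (Sp : Matrix (Fin (r - t)) (Fin (r - t)) ℂ)
    (A dA : Matrix (Fin r) (Fin r) ℂ)
    (dU dV : Matrix (Fin r) (Fin t) ℂ)
    (dS : Matrix (Fin t) (Fin t) ℂ)
    (dUp dVp : Matrix (Fin r) (Fin (r - t)) ℂ)
    (dSp : Matrix (Fin (r - t)) (Fin (r - t)) ℂ)
    (hU : Uᴴ * U = 1) (hV : Vᴴ * V = 1)
    (hUp : Upᴴ * Up = 1) (hVp : Vpᴴ * Vp = 1)
    (hUUp : Uᴴ * Up = 0) (hVVp : Vᴴ * Vp = 0)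
    (hS : S = Matrix.diagonal (fun i => (s i : ℂ)))
    (hSp : Sp = Matrix.diagonal (fun i => (sp i : ℂ)))
    (hA : A = U * S * Vᴴ + Up * Sp * Vpᴴ)
    (hdA : dA = dU * S * Vᴴ + U * dS * Vᴴ + U * S * dVᴴ
        + dUp * Sp * Vpᴴ + Up * dSp * Vpᴴ + Up * Sp * dVpᴴ)
    (hdUU : dUᴴ * U + Uᴴ * dU = 0)
    (hdVV : dVᴴ * V + Vᴴ * dV = 0)
    (ds : Fin t → ℝ)
    (hdS : dS = Matrix.diagonal (fun i => (ds i : ℂ)))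
    (hs : ∀ k, s k ≠ 0) :
    ∀ k : Fin t,
      (Uᴴ * dU + dVᴴ * V) k k
        = (Uᴴ * dA * V - Vᴴ * dAᴴ * U) k k / (2 * (s k : ℂ)) := by
  intro k
  have hVpV : Vpᴴ * V = 0 := by
    have := congrArg conjTranspose hVVp
    simpa [conjTranspose_mul] using this
  have hUpU : Upᴴ * U = 0 := by
    have := congrArg conjTranspose hUUp
    simpa [conjTranspose_mul] using this
  have hSH : Sᴴ = S := by
    simp [hS, diagonal_conjTranspose, Function.comp]
  have hdSH : dSᴴ = dS := by
    simp [hdS, diagonal_conjTranspose, Function.comp]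
  -- key identity 1
  have h1 : Uᴴ * dA * V = Uᴴ * dU * S + dS + S * dVᴴ * V := by
    subst hdA
    simp only [Matrix.mul_add, Matrix.add_mul, Matrix.mul_assoc, hV, hVpV,
      Matrix.mul_one, Matrix.mul_zero]
    rw [← Matrix.mul_assoc Uᴴ U dS, ← Matrix.mul_assoc Uᴴ U (S * (dVᴴ * V)),
      ← Matrix.mul_assoc Uᴴ Up (Sp * (dVpᴴ * V)), hU, hUUp]
    simp [Matrix.mul_assoc]
  -- key identity 2 (conjugate transpose of 1)
  have h2 : Vᴴ * dAᴴ * U = S * dUᴴ * U + dS + Vᴴ * dV * S := by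
    have := congrArg conjTranspose h1
    simp only [conjTranspose_mul, conjTranspose_add, conjTranspose_conjTranspose,
      hSH, hdSH, Matrix.mul_assoc] at this
    rw [← Matrix.mul_assoc Vᴴ dAᴴ U] at this
    linear_combination (norm := (simp only [Matrix.mul_assoc]; abel)) this
  have hdUU' : dUᴴ * U = -(Uᴴ * dU) := eq_neg_of_add_eq_zero_left hdUU
  have hdVV' : Vᴴ * dV = -(dVᴴ * V) := eq_neg_of_add_eq_zero_right hdVV
  have hM : Uᴴ * dA * V - Vᴴ * dAᴴ * U
      = (Uᴴ * dU + dVᴴ * V) * S + S * (Uᴴ * dU + dVᴴ * V) := by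
    rw [h1, h2, Matrix.mul_assoc S dUᴴ U, hdUU', hdVV']
    simp only [Matrix.add_mul, Matrix.mul_add, Matrix.mul_assoc, mul_neg, neg_mul, neg_neg]
    abel
  rw [hM, hS]
  have hsk : (2 : ℂ) * (s k : ℂ) ≠ 0 := by
    simp [hs k]
  simp only [Matrix.add_apply, Matrix.mul_diagonal, Matrix.diagonal_mul]
  have hsk' : (s k : ℂ) ≠ 0 := by exact_mod_cast hs k
  field_simp
  ring
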